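/- A continuous linear operator T on a separable Fréchet space X is multiply recurrent if and only if it is AP-recurrent, i.e., for every nonempty open set U and every m there exists k with U ∩ T^{-k}(U) ∩ ... ∩ T^{-mk}(U) ≠ ∅ if and only if the set of vectors x such that for every open neighborhood U of x the return set N_T(x,U) = {n : T^n x ∈ U} contains arbitrarily long arithmetic progressions is dense in X. -/

import Mathlib

open Filter Topology
open scoped Uniformity

/-- A set of natural numbers contains arbitrarily long arithmetic progressions. -/
def ContainsAPs (A : Set ℕ) : Prop :=
  ∀ m : ℕ, ∃ a k : ℕ, 1 ≤ a ∧ 1 ≤ k ∧ ∀ j ≤ m, a + j * k ∈ A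

theorem multiplyRecurrent_iff_dense_AP_recurrent
    {X : Type*} [AddCommGroup X] [Module ℝ X] [UniformSpace X] [IsUniformAddGroup X]
    [ContinuousSMul ℝ X] [LocallyConvexSpace ℝ X] [CompleteSpace X]
    [TopologicalSpace.MetrizableSpace X] [TopologicalSpace.SeparableSpace X]
    (T : X →L[ℝ] X) :
    (∀ U : Set X, IsOpen U → U.Nonempty → ∀ m : ℕ,
        ∃ k : ℕ, 1 ≤ k ∧ ∃ x ∈ U, ∀ j ≤ m, (T ^ (j * k)) x ∈ U)
    ↔ Dense {x : X | ∀ U : Set X, IsOpen U → x ∈ U →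
        ContainsAPs {n : ℕ | (T ^ n) x ∈ U}} := by
  constructor
  · intro h
    -- Set up Baire category machinery
    haveI : (𝓤 X).IsCountablyGenerated := IsUniformAddGroup.uniformity_countably_generated
    haveI : SecondCountableTopology X :=
      letI := TopologicalSpace.metrizableSpaceMetric X
      UniformSpace.secondCountable_of_separable X
    -- the countable basis
    set 𝔅 := TopologicalSpace.countableBasis X with h𝔅
    have hbasis := TopologicalSpace.isBasis_countableBasis X
    have hcount : 𝔅.Countable := TopologicalSpace.countable_countableBasis X
    haveI : Countable 𝔅 := hcount.to_subtype
    -- the good open dense sets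
    set G : 𝔅 × ℕ → Set X := fun p =>
      (closure (p.1 : Set X))ᶜ ∪
        {x | ∃ a k : ℕ, 1 ≤ a ∧ 1 ≤ k ∧ ∀ j ≤ p.2, (T ^ (a + j * k)) x ∈ (p.1 : Set X)}
        with hG
    have hopen : ∀ p, IsOpen (G p) := by
      intro ⟨B, m⟩
      have hBopen : IsOpen (B : Set X) :=
        TopologicalSpace.isOpen_of_mem_countableBasis B.2
      apply (isClosed_closure.isOpen_compl).union
      have : {x | ∃ a k : ℕ, 1 ≤ a ∧ 1 ≤ k ∧ ∀ j ≤ m, (T ^ (a + j * k)) x ∈ (B : Set X)}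
          = ⋃ a : ℕ, ⋃ k : ℕ, ⋃ (_ : 1 ≤ a), ⋃ (_ : 1 ≤ k),
              ⋂ j ∈ Set.Iic m, (T ^ (a + j * k)) ⁻¹' (B : Set X) := by
        ext x
        simp only [Set.mem_setOf_eq, Set.mem_iUnion, Set.mem_iInter, Set.mem_preimage,
          Set.mem_Iic, exists_prop]
      rw [this]
      refine isOpen_iUnion fun a => isOpen_iUnion fun k => isOpen_iUnion fun _ =>
        isOpen_iUnion fun _ => ?_
      exact (Set.finite_Iic m).isOpen_biInter fun j _ =>
        hBopen.preimage (T ^ (a + j * k)).continuous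
    have hdense : ∀ p, Dense (G p) := by
      intro ⟨B, m⟩
      rw [dense_iff_inter_open]
      intro V hV hVne
      by_cases hsub : (V ∩ (closure (B : Set X))ᶜ).Nonempty
      · obtain ⟨x, hx1, hx2⟩ := hsub
        exact ⟨x, hx1, Or.inl hx2⟩
      · -- V ⊆ closure B, so V ∩ B is nonempty open
        have hVcl : V ⊆ closure (B : Set X) := by
          intro x hx
          by_contra hxc
          exact hsub ⟨x, hx, hxc⟩
        have hBopen : IsOpen (B : Set X) :=
          TopologicalSpace.isOpen_of_mem_countableBasis B.2
        have hWne : (V ∩ (B : Set X)).Nonempty := by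
          obtain ⟨v, hv⟩ := hVne
          have := hVcl hv
          rcases mem_closure_iff.1 this V hV hv with ⟨y, hy1, hy2⟩
          exact ⟨y, hy1, hy2⟩
        obtain ⟨k, hk, x, hxW, hx⟩ := h (V ∩ (B : Set X)) (hV.inter hBopen) hWne (m + 1)
        refine ⟨x, hxW.1, Or.inr ⟨k, k, hk, hk, fun j hj => ?_⟩⟩
        have h1 : k + j * k = (j + 1) * k := by ring
        have := hx (j + 1) (by omega)
        rw [h1]
        exact this.2
    have hDense : Dense (⋂ p, G p) := dense_iInter_of_isOpen hopen hdense
    refine hDense.mono ?_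
    intro x hx U hU hxU m
    obtain ⟨B, hB𝔅, hxB, hBU⟩ := hbasis.exists_subset_of_mem_open hxU hU
    have hxG := Set.mem_iInter.1 hx (⟨B, hB𝔅⟩, m)
    rcases hxG with hc | ⟨a, k, ha, hk, hap⟩
    · exact absurd (subset_closure hxB) hc
    · exact ⟨a, k, ha, hk, fun j hj => hBU (hap j hj)⟩
  · intro h U hU hUne m
    obtain ⟨x, hxU, hxS⟩ := dense_iff_inter_open.1 h U hU hUne
    obtain ⟨a, k, ha, hk, hap⟩ := hxS U hU hxU m
    refine ⟨k, hk, (T ^ a) x, ?_, fun j hj => ?_⟩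
    · have := hap 0 (Nat.zero_le m)
      simpa using this
    · have : (T ^ (j * k)) ((T ^ a) x) = (T ^ (a + j * k)) x := by
        rw [Nat.add_comm, pow_add, ContinuousLinearMap.mul_apply]
      rw [this]
      exact hap j hj
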